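/- Let K and D be n×n positive semidefinite matrices with all eigenvalues in [0,1], with D diagonal. If T ∼ DPP_cor(K) and R ∼ DPP_cor(D) are independent, then T ∪ R ∼ DPP_cor(D + (I−D)^{1/2} K (I−D)^{1/2}). Equivalently, for every subset A ⊆ [n], Pr(A ⊆ T ∪ R) = det([D + (I−D)^{1/2} K (I−D)^{1/2}]_{A,A}). -/

import Mathlib

open Matrix MeasureTheory ProbabilityTheory BigOperators Finset

noncomputable instance finsetMeasurableSpace (n : ℕ) : MeasurableSpace (Finset (Fin n)) := ⊤

section auxlemmas
open Matrix BigOperators Finset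

variable {ι : Type*} [Fintype ι] [DecidableEq ι]

lemma det_piecewise_diag (s : Finset ι) (d : ι → ℝ) (M : Matrix ι ι ℝ) :
    Matrix.det (s.piecewise M (Matrix.diagonal d)) =
      (∏ i ∈ sᶜ, d i) *
        Matrix.det (M.submatrix (fun x : {i // i ∈ s} => (x : ι)) (fun x : {i // i ∈ s} => (x : ι))) := by
  classical
  set X : Matrix ι ι ℝ := s.piecewise M (Matrix.diagonal d) with hX
  have hσ := Matrix.det_submatrix_equiv_self (Equiv.sumCompl (· ∈ s)) X
  have hblock : X.submatrix (Equiv.sumCompl (· ∈ s)) (Equiv.sumCompl (· ∈ s)) =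
      Matrix.fromBlocks
        (M.submatrix (fun x : {i // i ∈ s} => (x : ι)) (fun x : {i // i ∈ s} => (x : ι)))
        (Matrix.of fun (x : {i // i ∈ s}) (y : {i // ¬ i ∈ s}) => M (x : ι) (y : ι))
        (0 : Matrix {i // ¬ i ∈ s} {i // i ∈ s} ℝ)
        (Matrix.diagonal (fun x : {i // ¬ i ∈ s} => d (x : ι))) := by
    ext u v
    cases u with
    | inl x =>
      cases v with
      | inl y => rw [Matrix.submatrix_apply]; simp [X, Finset.piecewise, x.2]
      | inr y => rw [Matrix.submatrix_apply]; simp [X, Finset.piecewise, x.2]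
    | inr x =>
      cases v with
      | inl y =>
        have hxy : (x : ι) ≠ (y : ι) := fun h => x.2 (h ▸ y.2)
        rw [Matrix.submatrix_apply]
        simp [X, Finset.piecewise, x.2, Matrix.diagonal_apply_ne _ hxy]
      | inr y =>
        have : ((x : ι) = (y : ι)) ↔ x = y := Subtype.val_inj
        rw [Matrix.submatrix_apply]
        simp only [Matrix.submatrix_apply, Equiv.sumCompl_apply_inr, X,
          Finset.piecewise, Matrix.fromBlocks_apply₂₂]
        by_cases h : x = y
        · subst h; simp [x.2]
        · rw [if_neg x.2, Matrix.diagonal_apply_ne _ (fun hh => h (Subtype.ext hh)),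
            Matrix.diagonal_apply_ne _ h]
  rw [← hσ, hblock, Matrix.det_fromBlocks_zero₂₁, Matrix.det_diagonal, mul_comm]
  congr 1
  exact ((Finset.prod_subtype sᶜ (fun x => Finset.mem_compl) d).trans rfl).symm

lemma det_diag_add (d : ι → ℝ) (M : Matrix ι ι ℝ) :
    (Matrix.diagonal d + M).det =
      ∑ s : Finset ι, (∏ i ∈ sᶜ, d i) *
        Matrix.det (M.submatrix (fun x : {i // i ∈ s} => (x : ι)) (fun x : {i // i ∈ s} => (x : ι))) := by
  classical
  rw [add_comm]
  have h2 := (Matrix.detRowAlternating (R := ℝ) (n := ι)).toMultilinearMap.map_add_univ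
    (M : ι → ι → ℝ) (Matrix.diagonal d : ι → ι → ℝ)
  calc (M + Matrix.diagonal d).det
      = ∑ s : Finset ι, Matrix.det (s.piecewise M (Matrix.diagonal d)) := h2
    _ = _ := Finset.sum_congr rfl fun s _ => det_piecewise_diag s d M

section aux2
variable {α : Type*} [DecidableEq α]

lemma map_subtype_subset (A : Finset α) (s : Finset {i // i ∈ A}) :
    s.map (Function.Embedding.subtype _) ⊆ A := by
  intro a ha
  obtain ⟨x, _, he⟩ := Finset.mem_map.1 ha
  exact he ▸ x.2

lemma compl_map_subtype (A : Finset α) [Fintype {i // i ∈ A}] (s : Finset {i // i ∈ A}) :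
    (sᶜ : Finset {i // i ∈ A}).map (Function.Embedding.subtype _) =
      A \ s.map (Function.Embedding.subtype _) := by
  ext a
  simp only [Finset.mem_map, Finset.mem_compl, Finset.mem_sdiff, Function.Embedding.coe_subtype,
    Subtype.exists]
  constructor
  · rintro ⟨b, hbA, hb, rfl⟩
    exact ⟨hbA, fun ⟨c, hcA, hc, hce⟩ => hb (by cases hce; exact hc)⟩
  · rintro ⟨haA, h⟩
    exact ⟨a, haA, fun hmem => h ⟨a, haA, hmem, rfl⟩, rfl⟩

lemma subtype_map_eq (A : Finset α) (s : Finset {i // i ∈ A}) :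
    (s.map (Function.Embedding.subtype _)).subtype (· ∈ A) = s := by
  ext x
  simp only [Finset.mem_subtype, Finset.mem_map, Function.Embedding.coe_subtype, Subtype.exists,
    exists_and_left, exists_prop]
  constructor
  · rintro ⟨b, hbA, hb, hbe⟩
    have : (⟨b, hbA⟩ : {i // i ∈ A}) = x := Subtype.ext hbe
    rwa [← this]
  · intro hx
    exact ⟨x.1, x.2, by simpa using hx, rfl⟩

lemma map_subtype_eq (A B : Finset α) (hB : B ⊆ A) :
    (B.subtype (· ∈ A)).map (Function.Embedding.subtype _) = B := by
  rw [Finset.subtype_map]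
  exact Finset.filter_true_of_mem fun i hi => hB hi

def mapSubtypeEquiv {n : ℕ} (A : Finset (Fin n)) (s : Finset {i // i ∈ A}) :
    {x : {i // i ∈ A} // x ∈ s} ≃ {i : Fin n // i ∈ s.map (Function.Embedding.subtype _)} where
  toFun x := ⟨x.1.1, Finset.mem_map.2 ⟨x.1, x.2, rfl⟩⟩
  invFun y := ⟨⟨y.1, map_subtype_subset A s y.2⟩, by
    obtain ⟨x, hx, he⟩ := Finset.mem_map.1 y.2
    have : x = ⟨y.1, map_subtype_subset A s y.2⟩ := Subtype.ext he
    exact this ▸ hx⟩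
  left_inv x := Subtype.ext (Subtype.ext rfl)
  right_inv y := Subtype.ext rfl

lemma det_submatrix_map (n : ℕ) (N : Matrix (Fin n) (Fin n) ℝ) (A : Finset (Fin n))
    (s : Finset {i // i ∈ A}) :
    Matrix.det (((N.submatrix (fun x : {i // i ∈ A} => (x : Fin n)) fun x => (x : Fin n))).submatrix
        (fun x : {y // y ∈ s} => (x : {i // i ∈ A})) fun x => (x : {i // i ∈ A})) =
      Matrix.det (N.submatrix
        (fun x : {i // i ∈ s.map (Function.Embedding.subtype _)} => (x : Fin n))
        fun x => (x : Fin n)) := by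
  rw [← Matrix.det_submatrix_equiv_self (mapSubtypeEquiv A s)
    (N.submatrix (fun x : {i // i ∈ s.map (Function.Embedding.subtype _)} => (x : Fin n))
      fun x => (x : Fin n))]
  rfl

lemma prod_sdiff_expand (A S : Finset α) (hS : S ⊆ A) (d : α → ℝ) :
    ∏ i ∈ A \ S, d i = ∑ B ∈ S.powerset, (∏ i ∈ A \ B, d i) * ∏ i ∈ B, (1 - d i) := by
  have key : ∀ B ∈ S.powerset, (∏ i ∈ A \ B, d i) * ∏ i ∈ B, (1 - d i) =
      (∏ i ∈ A \ S, d i) * ((∏ i ∈ B, (1 - d i)) * ∏ i ∈ S \ B, d i) := by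
    intro B hB
    have hBS : B ⊆ S := Finset.mem_powerset.1 hB
    have hsplit : A \ B = (A \ S) ∪ (S \ B) := by
      ext x
      simp only [Finset.mem_sdiff, Finset.mem_union]
      constructor
      · rintro ⟨hxA, hxB⟩
        by_cases hxS : x ∈ S
        · exact Or.inr ⟨hxS, hxB⟩
        · exact Or.inl ⟨hxA, hxS⟩
      · rintro (⟨hxA, hxS⟩ | ⟨hxS, hxB⟩)
        · exact ⟨hxA, fun h => hxS (hBS h)⟩
        · exact ⟨hS hxS, hxB⟩
    have hdisj : Disjoint (A \ S) (S \ B) := by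
      rw [Finset.disjoint_left]
      intro x hx hx'
      exact (Finset.mem_sdiff.1 hx).2 (Finset.mem_sdiff.1 hx').1
    rw [hsplit, Finset.prod_union hdisj]; ring
  rw [Finset.sum_congr rfl key, ← Finset.mul_sum]
  have : ∑ B ∈ S.powerset, (∏ i ∈ B, (1 - d i)) * ∏ i ∈ S \ B, d i =
      ∏ i ∈ S, ((1 - d i) + d i) := (Finset.prod_add _ _ _).symm
  rw [this]
  simp

end aux2
end auxlemmas

/-- Combining an independent pair of determinantal point processes with
correlation kernels `K` and diagonal `D` (eigenvalues in `[0,1]`) by taking the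
union gives a DPP with correlation kernel `D + (I-D)^{1/2} K (I-D)^{1/2}`. -/
theorem dpp_union_bernoulli
    (n : ℕ) (Ω : Type*) [MeasurableSpace Ω] (μ : Measure Ω) [IsProbabilityMeasure μ]
    (K : Matrix (Fin n) (Fin n) ℝ) (hK : K.PosSemidef) (hK1 : (1 - K).PosSemidef)
    (dvec : Fin n → ℝ) (hd : ∀ i, dvec i ∈ Set.Icc (0 : ℝ) 1)
    (T R : Ω → Finset (Fin n)) (hTmeas : Measurable T) (hRmeas : Measurable R)
    (hTR : IndepFun T R μ)
    (hT : ∀ A : Finset (Fin n),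
      (μ {ω | A ⊆ T ω}).toReal =
        (K.submatrix (Subtype.val : {i // i ∈ A} → Fin n) Subtype.val).det)
    (hR : ∀ A : Finset (Fin n),
      (μ {ω | A ⊆ R ω}).toReal =
        ((Matrix.diagonal dvec).submatrix
          (Subtype.val : {i // i ∈ A} → Fin n) Subtype.val).det) :
    ∀ A : Finset (Fin n),
      (μ {ω | A ⊆ T ω ∪ R ω}).toReal =
        ((Matrix.diagonal dvec +
            Matrix.diagonal (fun i => Real.sqrt (1 - dvec i)) * K *
              Matrix.diagonal (fun i => Real.sqrt (1 - dvec i))).submatrix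
          (Subtype.val : {i // i ∈ A} → Fin n) Subtype.val).det := by
  intro A
  classical
  set g : Finset (Fin n) → ℝ := fun S => (μ {ω | A ∩ T ω = S}).toReal with hg
  -- measurability of the basic events
  have hmT : ∀ E : Set (Finset (Fin n)), MeasurableSet (T ⁻¹' E) :=
    fun E => hTmeas (by exact MeasurableSpace.measurableSet_top)
  have hmR : ∀ E : Set (Finset (Fin n)), MeasurableSet (R ⁻¹' E) :=
    fun E => hRmeas (by exact MeasurableSpace.measurableSet_top)
  -- detK notation
  set detK : Finset (Fin n) → ℝ := fun B =>
    (K.submatrix (Subtype.val : {i // i ∈ B} → Fin n) Subtype.val).det with hdetK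
  -- Step P4: probability that a fixed set is inside R
  have haveR : ∀ S : Finset (Fin n), (μ {ω | S ⊆ R ω}).toReal = ∏ i ∈ S, dvec i := by
    intro S
    rw [hR S]
    rw [show ((Matrix.diagonal dvec).submatrix (Subtype.val : {i // i ∈ S} → Fin n) Subtype.val)
        = Matrix.diagonal (fun x : {i // i ∈ S} => dvec x) from
      Matrix.submatrix_diagonal dvec Subtype.val Subtype.val_injective]
    rw [Matrix.det_diagonal]
    exact (Finset.prod_subtype S (fun x => Iff.rfl) dvec).symm
  -- Step 1: decomposition of the union event
  have hUnion : {ω | A ⊆ T ω ∪ R ω} =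
      ⋃ S ∈ A.powerset, ((T ⁻¹' {t | A ∩ t = S}) ∩ (R ⁻¹' {t | A \ S ⊆ t})) := by
    ext ω
    simp only [Set.mem_setOf_eq, Set.mem_iUnion, Set.mem_inter_iff, Set.mem_preimage,
      Finset.mem_powerset, exists_prop]
    constructor
    · intro h
      refine ⟨A ∩ T ω, Finset.inter_subset_left, rfl, ?_⟩
      intro i hi
      have hiA := (Finset.mem_sdiff.1 hi).1
      have hiT : i ∉ T ω := fun hT' =>
        (Finset.mem_sdiff.1 hi).2 (Finset.mem_inter.2 ⟨hiA, hT'⟩)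
      rcases Finset.mem_union.1 (h hiA) with h' | h'
      · exact absurd h' hiT
      · exact h'
    · rintro ⟨S, hSA, hTS, hRS⟩ i hiA
      by_cases hiT : i ∈ T ω
      · exact Finset.mem_union.2 (Or.inl hiT)
      · refine Finset.mem_union.2 (Or.inr (hRS ?_))
        refine Finset.mem_sdiff.2 ⟨hiA, fun hiS => hiT ?_⟩
        have : i ∈ A ∩ T ω := hTS ▸ hiS
        exact (Finset.mem_inter.1 this).2
  have hdisj : Set.PairwiseDisjoint (↑A.powerset)
      (fun S => (T ⁻¹' {t | A ∩ t = S}) ∩ (R ⁻¹' {t | A \ S ⊆ t})) := by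
    intro S _ S' _ hne
    rw [Function.onFun, Set.disjoint_left]
    rintro ω ⟨h1, _⟩ ⟨h2, _⟩
    exact hne (h1.symm.trans h2)
  have h1 : μ {ω | A ⊆ T ω ∪ R ω}
      = ∑ S ∈ A.powerset, μ ((T ⁻¹' {t | A ∩ t = S}) ∩ (R ⁻¹' {t | A \ S ⊆ t})) := by
    rw [hUnion]
    exact measure_biUnion_finset hdisj fun S _ => (hmT _).inter (hmR _)
  have h2 : ∀ S, μ ((T ⁻¹' {t | A ∩ t = S}) ∩ (R ⁻¹' {t | A \ S ⊆ t}))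
      = μ (T ⁻¹' {t | A ∩ t = S}) * μ (R ⁻¹' {t | A \ S ⊆ t}) := fun S =>
    hTR.measure_inter_preimage_eq_mul _ _ MeasurableSpace.measurableSet_top
      MeasurableSpace.measurableSet_top
  have hLHS : (μ {ω | A ⊆ T ω ∪ R ω}).toReal
      = ∑ S ∈ A.powerset, g S * ∏ i ∈ A \ S, dvec i := by
    rw [h1, ENNReal.toReal_sum (fun S _ => measure_ne_top μ _)]
    refine Finset.sum_congr rfl fun S _ => ?_
    rw [h2 S, ENNReal.toReal_mul]
    exact congrArg₂ (· * ·) rfl (haveR (A \ S))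
  -- Step P5: probabilities of `B ⊆ T`
  have hTB : ∀ B ∈ A.powerset,
      ∑ S ∈ A.powerset.filter (fun S => B ⊆ S), g S = detK B := by
    intro B hB
    have hBA : B ⊆ A := Finset.mem_powerset.1 hB
    have hsplit : {ω | B ⊆ T ω} =
        ⋃ S ∈ A.powerset.filter (fun S => B ⊆ S), (T ⁻¹' {t | A ∩ t = S}) := by
      ext ω
      simp only [Set.mem_setOf_eq, Set.mem_iUnion, Set.mem_preimage, Finset.mem_filter,
        Finset.mem_powerset, exists_prop]
      constructor
      · intro h
        exact ⟨A ∩ T ω, ⟨Finset.inter_subset_left,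
          Finset.subset_inter hBA h⟩, rfl⟩
      · rintro ⟨S, ⟨_, hBS⟩, hTS⟩
        exact hBS.trans (hTS ▸ Finset.inter_subset_right)
    have : μ {ω | B ⊆ T ω} = ∑ S ∈ A.powerset.filter (fun S => B ⊆ S),
        μ (T ⁻¹' {t | A ∩ t = S}) := by
      rw [hsplit]
      refine measure_biUnion_finset ?_ fun S _ => hmT _
      intro S _ S' _ hne
      rw [Function.onFun, Set.disjoint_left]
      intro ω h1' h2'
      exact hne (h1'.symm.trans h2')
    have := congrArg ENNReal.toReal this
    rw [ENNReal.toReal_sum (fun S _ => measure_ne_top μ _)] at this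
    exact this.symm.trans (hT B)
  -- main combinatorial identity on the probability side
  have hmain : (μ {ω | A ⊆ T ω ∪ R ω}).toReal
      = ∑ B ∈ A.powerset, (∏ i ∈ A \ B, dvec i) * (∏ i ∈ B, (1 - dvec i)) * detK B := by
    rw [hLHS]
    have step1 : ∀ S ∈ A.powerset, g S * ∏ i ∈ A \ S, dvec i
        = ∑ B ∈ S.powerset, g S * ((∏ i ∈ A \ B, dvec i) * ∏ i ∈ B, (1 - dvec i)) := by
      intro S hS
      rw [prod_sdiff_expand A S (Finset.mem_powerset.1 hS) dvec, Finset.mul_sum]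
    rw [Finset.sum_congr rfl step1]
    rw [Finset.sum_comm' (s := A.powerset) (t := fun S => S.powerset)
      (t' := A.powerset) (s' := fun B => A.powerset.filter (fun S => B ⊆ S))
      (by
        intro S B
        simp only [Finset.mem_powerset, Finset.mem_filter]
        constructor
        · rintro ⟨hSA, hBS⟩; exact ⟨⟨hSA, hBS⟩, hBS.trans hSA⟩
        · rintro ⟨⟨hSA, hBS⟩, _⟩; exact ⟨hSA, hBS⟩)]
    refine Finset.sum_congr rfl fun B hB => ?_
    rw [← Finset.sum_mul, hTB B hB]
    ring
  rw [hmain]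
  -- now the linear-algebra side
  set d' : {i // i ∈ A} → ℝ := fun x => dvec x with hd'
  set e' : {i // i ∈ A} → ℝ := fun x => Real.sqrt (1 - dvec x) with he'
  set K' : Matrix {i // i ∈ A} {i // i ∈ A} ℝ :=
    K.submatrix Subtype.val Subtype.val with hK'
  have hsub : ((Matrix.diagonal dvec +
      Matrix.diagonal (fun i => Real.sqrt (1 - dvec i)) * K *
        Matrix.diagonal (fun i => Real.sqrt (1 - dvec i))).submatrix
      (Subtype.val : {i // i ∈ A} → Fin n) Subtype.val)
      = Matrix.diagonal d' + Matrix.diagonal e' * K' * Matrix.diagonal e' := by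
    ext x y
    simp only [Matrix.submatrix_apply, Matrix.add_apply, Matrix.mul_diagonal,
      Matrix.diagonal_mul, Matrix.diagonal_apply, Subtype.val_inj, hd', he', hK']
  rw [hsub, det_diag_add]
  -- evaluate each term
  have hterm : ∀ s : Finset {i // i ∈ A},
      Matrix.det ((Matrix.diagonal e' * K' * Matrix.diagonal e').submatrix
        (fun x : {i // i ∈ s} => (x : {i // i ∈ A})) (fun x : {i // i ∈ s} => (x : {i // i ∈ A})))
      = (∏ x ∈ s, (1 - dvec x)) * detK (s.map (Function.Embedding.subtype _)) := by
    intro s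
    have hmat : ((Matrix.diagonal e' * K' * Matrix.diagonal e').submatrix
        (fun x : {i // i ∈ s} => (x : {i // i ∈ A})) (fun x : {i // i ∈ s} => (x : {i // i ∈ A})))
        = Matrix.diagonal (fun x : {i // i ∈ s} => e' x) *
          (K'.submatrix (fun x : {i // i ∈ s} => (x : {i // i ∈ A}))
            (fun x : {i // i ∈ s} => (x : {i // i ∈ A}))) *
          Matrix.diagonal (fun x : {i // i ∈ s} => e' x) := by
      ext x y
      simp [Matrix.mul_diagonal, Matrix.diagonal_mul]
    rw [hmat, Matrix.det_mul, Matrix.det_mul, Matrix.det_diagonal]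
    have hdet := det_submatrix_map n K A s
    have hsq : (∏ x : {i // i ∈ s}, e' (x : {i // i ∈ A})) *
        (∏ x : {i // i ∈ s}, e' (x : {i // i ∈ A})) = ∏ x ∈ s, (1 - dvec x) := by
      rw [← Finset.prod_mul_distrib]
      rw [← Finset.prod_subtype s (fun x => Iff.rfl)
        (fun x : {i // i ∈ A} => e' x * e' x)]
      refine Finset.prod_congr rfl fun x _ => ?_
      exact Real.mul_self_sqrt (by linarith [(hd x).2])
    calc (∏ x : {i // i ∈ s}, e' (x : {i // i ∈ A})) *
          Matrix.det (K'.submatrix (fun x : {i // i ∈ s} => (x : {i // i ∈ A}))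
            (fun x : {i // i ∈ s} => (x : {i // i ∈ A}))) *
          (∏ x : {i // i ∈ s}, e' (x : {i // i ∈ A}))
        = ((∏ x : {i // i ∈ s}, e' (x : {i // i ∈ A})) *
            (∏ x : {i // i ∈ s}, e' (x : {i // i ∈ A}))) *
          Matrix.det (K'.submatrix (fun x : {i // i ∈ s} => (x : {i // i ∈ A}))
            (fun x : {i // i ∈ s} => (x : {i // i ∈ A}))) := by ring
      _ = (∏ x ∈ s, (1 - dvec x)) * detK (s.map (Function.Embedding.subtype _)) := by
          rw [hsq]
          exact congrArg (fun r => (∏ x ∈ s, (1 - dvec (x : Fin n))) * r) hdet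
  have hterm' : ∑ s : Finset {i // i ∈ A}, (∏ i ∈ sᶜ, d' i) *
      Matrix.det ((Matrix.diagonal e' * K' * Matrix.diagonal e').submatrix
        (fun x : {i // i ∈ s} => (x : {i // i ∈ A})) (fun x : {i // i ∈ s} => (x : {i // i ∈ A})))
      = ∑ s : Finset {i // i ∈ A}, (∏ i ∈ sᶜ, d' i) *
        ((∏ x ∈ s, (1 - dvec x)) * detK (s.map (Function.Embedding.subtype _))) :=
    Finset.sum_congr rfl fun s _ => by rw [hterm s]
  rw [hterm']
  -- reindex the sum
  refine (Finset.sum_nbij' (fun s => s.map (Function.Embedding.subtype _))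
    (fun B => B.subtype (· ∈ A)) ?_ ?_ ?_ ?_ ?_).symm
  · intro s _
    exact Finset.mem_powerset.2 (map_subtype_subset A s)
  · intro B _
    exact Finset.mem_univ _
  · intro s _
    exact subtype_map_eq A s
  · intro B hB
    exact map_subtype_eq A B (Finset.mem_powerset.1 hB)
  · intro s _
    have hprodc : (∏ i ∈ (sᶜ : Finset {i // i ∈ A}), d' i)
        = ∏ i ∈ A \ s.map (Function.Embedding.subtype _), dvec i := by
      rw [← compl_map_subtype A s, Finset.prod_map]
      rfl
    have hprods : (∏ x ∈ s, (1 - dvec (x : Fin n)))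
        = ∏ i ∈ s.map (Function.Embedding.subtype _), (1 - dvec i) := by
      rw [Finset.prod_map]
      rfl
    rw [hprodc, hprods]
    ring
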